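/- The sequence of quantum integers [1], [3], [5], [1] is Schur log-concave but not strongly Schur log-concave: [3]² − [5][1] and [5]² − [3][1] are non-negative combinations of quantum integers, but [3][5] − [1]² is not. -/

import Mathlib

open LaurentPolynomial

/-- The quantum integer `[m] = q^{-m+1} + q^{-m+3} + ⋯ + q^{m-1}` in `ℤ[q,q⁻¹]`. -/
noncomputable def qint (m : ℕ) : LaurentPolynomial ℤ :=
  ∑ t ∈ Finset.range m, T (2 * (t : ℤ) - ((m : ℤ) - 1))

open Classical in
/-- The quantum binomial `[n choose k] = ([n][n-1]⋯[n-k+1])/([k][k-1]⋯[1])`,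
defined as the (unique, when the denominator is nonzero) Laurent polynomial `c` with
`[k]⋯[1] * c = [n]⋯[n-k+1]`. -/
noncomputable def qbinom (n k : ℕ) : LaurentPolynomial ℤ :=
  if h : ∃ c, (∏ t ∈ Finset.range k, qint (t + 1)) * c = ∏ t ∈ Finset.range k, qint (n - t)
  then h.choose else 0
/-- A Laurent polynomial is centred if it is invariant under `q ↦ q⁻¹`. -/
def Centred (f : LaurentPolynomial ℤ) : Prop := ∀ z : ℤ, f.coeff z = f.coeff (-z)

/-- A Laurent polynomial has non-negative coefficients. -/
def NonnegCoeffs (f : LaurentPolynomial ℤ) : Prop := ∀ z : ℤ, 0 ≤ f.coeff z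

/-- A Laurent polynomial is unimodal: its coefficients weakly increase up to some
point and weakly decrease afterwards. -/
def Unimodal (f : LaurentPolynomial ℤ) : Prop :=
  ∃ c : ℤ, (∀ a b : ℤ, a ≤ b → b ≤ c → f.coeff a ≤ f.coeff b) ∧
    (∀ a b : ℤ, c ≤ a → a ≤ b → f.coeff b ≤ f.coeff a)

/-- A Laurent polynomial is a non-negative integer combination of the quantum
integers `[1], [2], [3], …`. -/
def QPos (f : LaurentPolynomial ℤ) : Prop :=
  ∃ (m : ℕ) (c : ℕ → ℕ), f = ∑ t ∈ Finset.range m, (c t : ℤ) • qint (t + 1)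

set_option maxRecDepth 16000

lemma T_apply' (n z : ℤ) : (T n : LaurentPolynomial ℤ).coeff z = if n = z then 1 else 0 := by
  exact T_apply z n

lemma add_apply' (f g : LaurentPolynomial ℤ) (z : ℤ) : (f + g).coeff z = f.coeff z + g.coeff z := rfl
lemma sub_apply' (f g : LaurentPolynomial ℤ) (z : ℤ) : (f - g).coeff z = f.coeff z - g.coeff z := by simp
lemma zero_apply' (z : ℤ) : (0 : LaurentPolynomial ℤ).coeff z = 0 := rfl
lemma smul_apply' (n : ℤ) (f : LaurentPolynomial ℤ) (z : ℤ) : (n • f).coeff z = n * f.coeff z := rfl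
lemma sum_apply'' {ι : Type*} (s : Finset ι) (f : ι → LaurentPolynomial ℤ) (z : ℤ) :
    (∑ i ∈ s, f i).coeff z = ∑ i ∈ s, (f i).coeff z := by
  simp [AddMonoidAlgebra.coeff_sum, Finsupp.finset_sum_apply]

lemma qint_add_two (m : ℕ) :
    qint (m + 2) = qint m + T (-((m : ℤ) + 1)) + T ((m : ℤ) + 1) := by
  unfold qint
  rw [Finset.sum_range_succ, Finset.sum_range_succ']
  push_cast
  have h1 : ∀ t ∈ Finset.range m,
      T (2 * ((t : ℤ) + 1) - ((m : ℤ) + 2 - 1)) =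
        (T (2 * (t : ℤ) - ((m : ℤ) - 1)) : LaurentPolynomial ℤ) := by
    intro t _; congr 1; ring
  rw [Finset.sum_congr rfl h1]
  congr 1
  · congr 1; ring
  · congr 1; ring

lemma qint3_coeffs : (qint 3).coeff 2 ≤ (qint 3).coeff 0 := by
  simp only [qint, Finset.sum_range_succ, Finset.sum_range_zero, add_apply', zero_apply',
    T_apply']
  norm_num

lemma qle (m : ℕ) : (qint m).coeff 2 ≤ (qint m).coeff 0 := by
  induction m using Nat.twoStepInduction with
  | zero => simp [qint, zero_apply']
  | one =>
    simp only [qint, Finset.sum_range_succ, Finset.sum_range_zero, add_apply', zero_apply',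
      T_apply']
    norm_num
  | more n ih _ =>
    rcases eq_or_ne n 1 with rfl | hn
    · exact qint3_coeffs
    · rw [qint_add_two]
      simp only [add_apply', T_apply']
      have h1 : ¬((n : ℤ) + 1 = 2) := by omega
      have h2 : ¬(-((n : ℤ) + 1) = 2) := by omega
      have h3 : ¬((n : ℤ) + 1 = 0) := by omega
      have h4 : ¬(-((n : ℤ) + 1) = 0) := by omega
      rw [if_neg h1, if_neg h2, if_neg h3, if_neg h4]
      simpa using ih

lemma qpos_le {f : LaurentPolynomial ℤ} (h : QPos f) : f.coeff 2 ≤ f.coeff 0 := by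
  obtain ⟨m, c, rfl⟩ := h
  rw [sum_apply'', sum_apply'']
  apply Finset.sum_le_sum
  intro i _
  rw [smul_apply', smul_apply']
  exact mul_le_mul_of_nonneg_left (qle (i + 1)) (by positivity)

lemma key_id : qint 3 * qint 5 - qint 1 ^ 2 = qint 3 + qint 5 + qint 7 - qint 1 := by
  simp only [qint, Finset.sum_range_succ, Finset.sum_range_zero]
  norm_num
  ring_nf
  simp only [← T_add]
  norm_num
  ring_nf

/-- The sequence `[1], [3], [5], [1]` is Schur log-concave but not strongly Schur
log-concave. -/
theorem qint_1351_weak_not_strong :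
    QPos (qint 3 ^ 2 - qint 5 * qint 1) ∧
    QPos (qint 5 ^ 2 - qint 3 * qint 1) ∧
    ¬ QPos (qint 3 * qint 5 - qint 1 ^ 2) := by
  refine ⟨?_, ?_, ?_⟩
  · refine ⟨3, fun t => if t = 0 then 1 else if t = 2 then 1 else 0, ?_⟩
    have h : qint 3 ^ 2 - qint 5 * qint 1 = qint 1 + qint 3 := by
      simp only [qint, Finset.sum_range_succ, Finset.sum_range_zero]
      norm_num
      ring_nf
      simp only [← T_add]
      norm_num
      ring_nf
    rw [h]
    simp [Finset.sum_range_succ]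
  · refine ⟨9, fun t => if t = 0 then 1 else if t = 4 then 1 else
      if t = 6 then 1 else if t = 8 then 1 else 0, ?_⟩
    have h : qint 5 ^ 2 - qint 3 * qint 1 = qint 1 + qint 5 + qint 7 + qint 9 := by
      simp only [qint, Finset.sum_range_succ, Finset.sum_range_zero]
      norm_num
      ring_nf
      simp only [← T_add]
      norm_num
      ring_nf
    rw [h]
    simp [Finset.sum_range_succ]
  · intro h
    have hle := qpos_le h
    rw [key_id] at hle
    have h0 : (qint 3 + qint 5 + qint 7 - qint 1).coeff 0 = 2 := by
      simp only [qint, Finset.sum_range_succ, Finset.sum_range_zero, add_apply', sub_apply',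
        zero_apply', T_apply']
      norm_num
    have h2 : (qint 3 + qint 5 + qint 7 - qint 1).coeff 2 = 3 := by
      simp only [qint, Finset.sum_range_succ, Finset.sum_range_zero, add_apply', sub_apply',
        zero_apply', T_apply']
      norm_num
    rw [h0, h2] at hle
    norm_num at hle
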